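/- Consider n keys, each key x assigned two independent random variables: y_x (continuously distributed, e.g., y_x ~ Exp(w_x)) and an independent uniform hash h_x ~ U[0,1], with all 2n variables independent. For each ℓ > 0, let S_ℓ be the set of k keys minimizing the seed s_ℓ(x) = h_x/ℓ if y_x ≤ 1/ℓ, else y_x. Then the expected number of distinct keys in ⋃_{ℓ > 0} S_ℓ is at most k·(1 + ln n) (i.e., k·H_n where H_n is the n-th harmonic number). -/

import Mathlib

open MeasureTheory ProbabilityTheory


open Finset in
/-- harmonic bound -/
lemma aux_harmonic_le (n : ℕ) : ∑ i ∈ Finset.Icc 1 n, (1 : ℝ)/i ≤ 1 + Real.log n := by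
  induction n with
  | zero => simp
  | succ n ih =>
    rcases Nat.eq_zero_or_pos n with rfl | hn
    · norm_num
    rw [Finset.sum_Icc_succ_top (by omega)]
    have hlog : Real.log n + 1/(n+1) ≤ Real.log (n+1) := by
      have h1 : Real.log ((n:ℝ)/(n+1)) ≤ (n:ℝ)/(n+1) - 1 := by
        apply Real.log_le_sub_one_of_pos
        positivity
      have hne : ((n:ℝ)+1) ≠ 0 := by positivity
      rw [Real.log_div (by exact_mod_cast Nat.cast_pos.mpr hn |>.ne') hne] at h1
      have : (n:ℝ)/(n+1) - 1 = -(1/(n+1)) := by field_simp; ring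
      rw [this] at h1
      push_cast
      linarith
    push_cast
    push_cast at ih
    linarith

open Finset in
/-- nested ranks are injective -/
lemma aux_rank_injOn {α : Type*} [DecidableEq α] {v : α → ℝ} {T : Finset α}
    (hv : Set.InjOn v T) :
    Set.InjOn (fun w => (T.filter (fun z => v z ≤ v w)).card) T := by
  intro a ha b hb hab
  simp only at hab
  by_contra hne
  wlog hle : v a ≤ v b generalizing a b
  · exact this hb ha hab.symm (Ne.symm hne) (le_of_not_ge hle)
  have hsub : T.filter (fun z => v z ≤ v a) ⊆ T.filter (fun z => v z ≤ v b) := by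
    intro z hz
    simp only [Finset.mem_filter] at hz ⊢
    exact ⟨hz.1, hz.2.trans hle⟩
  have heq : T.filter (fun z => v z ≤ v a) = T.filter (fun z => v z ≤ v b) :=
    Finset.eq_of_subset_of_card_le hsub (le_of_eq hab.symm)
  have hbmem : b ∈ T.filter (fun z => v z ≤ v a) := by
    rw [heq]; simp [Finset.mem_coe.mp hb]
  simp only [Finset.mem_filter] at hbmem
  exact hne (hv ha hb (le_antisymm hle hbmem.2))



/-- relation between strict-rank and weak-rank -/
lemma aux_filter_lt_card {α : Type*} [DecidableEq α] {v : α → ℝ} {T : Finset α}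
    (hv : Set.InjOn v T) {w : α} (hw : w ∈ T) :
    ((T.erase w).filter (fun z => v z < v w)).card + 1
      = (T.filter (fun z => v z ≤ v w)).card := by
  have : T.filter (fun z => v z ≤ v w) = insert w ((T.erase w).filter (fun z => v z < v w)) := by
    ext z
    simp only [Finset.mem_filter, Finset.mem_insert, Finset.mem_erase]
    constructor
    · rintro ⟨hzT, hz⟩
      rcases eq_or_ne z w with rfl | hne
      · exact Or.inl rfl
      · exact Or.inr ⟨⟨hne, hzT⟩, lt_of_le_of_ne hz (fun he => hne (hv hzT hw he))⟩
    · rintro (rfl | ⟨⟨hne, hzT⟩, hz⟩)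
      · exact ⟨hw, le_rfl⟩
      · exact ⟨hzT, hz.le⟩
  rw [this, Finset.card_insert_of_notMem (by simp)]

/-- counting: at most k elements of T have strict-rank < k -/
lemma aux_count_low_rank {α : Type*} [DecidableEq α] {v : α → ℝ} {T : Finset α}
    (hv : Set.InjOn v T) (k : ℕ) :
    (T.filter (fun w => ((T.erase w).filter (fun z => v z < v w)).card < k)).card ≤ k := by
  classical
  have h1 : T.filter (fun w => ((T.erase w).filter (fun z => v z < v w)).card < k)
      ⊆ T.filter (fun w => (T.filter (fun z => v z ≤ v w)).card ≤ k) := by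
    intro w hw
    simp only [Finset.mem_filter] at hw ⊢
    refine ⟨hw.1, ?_⟩
    rw [← aux_filter_lt_card hv hw.1]
    omega
  refine le_trans (Finset.card_le_card h1) ?_
  have h2 : ∀ w ∈ T.filter (fun w => (T.filter (fun z => v z ≤ v w)).card ≤ k),
      (T.filter (fun z => v z ≤ v w)).card ∈ Finset.Icc 1 k := by
    intro w hw
    simp only [Finset.mem_filter] at hw
    simp only [Finset.mem_Icc]
    refine ⟨?_, hw.2⟩
    have : w ∈ T.filter (fun z => v z ≤ v w) := by simp [hw.1]
    have := Finset.card_pos.mpr ⟨w, this⟩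
    omega
  calc (T.filter (fun w => (T.filter (fun z => v z ≤ v w)).card ≤ k)).card
      ≤ (Finset.Icc 1 k).card := by
        apply Finset.card_le_card_of_injOn _ h2
        intro a ha b hb hab
        simp only [Finset.coe_filter, Set.mem_setOf_eq] at ha hb
        exact aux_rank_injOn hv ha.1 hb.1 hab
    _ = k := by simp

/-- sum over all keys of g(rank) equals sum over 1..n when v injective -/
lemma aux_sum_rank {n : ℕ} {v : Fin n → ℝ} (hv : Function.Injective v) (g : ℕ → ℝ) :
    ∑ x : Fin n, g ((Finset.univ.filter (fun z => v z < v x)).card + 1)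
      = ∑ i ∈ Finset.Icc 1 n, g i := by
  classical
  have hinj : Set.InjOn v (Finset.univ : Finset (Fin n)) := fun a _ b _ h => hv h
  have hr : ∀ x : Fin n, (Finset.univ.filter (fun z => v z < v x)).card + 1
      = (Finset.univ.filter (fun z => v z ≤ v x)).card := by
    intro x
    have := aux_filter_lt_card (T := (Finset.univ : Finset (Fin n))) hinj (Finset.mem_univ x)
    rw [← this]
    congr 1
    apply Finset.card_bij (fun z _ => z)
    · intro a ha
      simp only [Finset.mem_filter, Finset.mem_erase] at ha ⊢
      refine ⟨⟨?_, Finset.mem_univ _⟩, ha.2⟩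
      rintro rfl; exact lt_irrefl _ ha.2
    · intro a ha b hb hab; exact hab
    · intro b hb
      simp only [Finset.mem_filter, Finset.mem_erase] at hb
      exact ⟨b, by simp [hb.2], rfl⟩
  simp_rw [hr]
  set ρ : Fin n → ℕ := fun x => (Finset.univ.filter (fun z => v z ≤ v x)).card with hρ
  have hρinj : Function.Injective ρ := by
    intro a b hab
    exact aux_rank_injOn hinj (Finset.mem_coe.mpr (Finset.mem_univ a))
      (Finset.mem_coe.mpr (Finset.mem_univ b)) hab
  have himg : Finset.univ.image ρ = Finset.Icc 1 n := by
    apply Finset.eq_of_subset_of_card_le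
    · intro i hi
      simp only [Finset.mem_image] at hi
      obtain ⟨x, _, rfl⟩ := hi
      simp only [Finset.mem_Icc, hρ]
      constructor
      · have : x ∈ Finset.univ.filter (fun z => v z ≤ v x) := by simp
        have := Finset.card_pos.mpr ⟨x, this⟩
        omega
      · exact le_trans (Finset.card_filter_le _ _) (by simp)
    · rw [Finset.card_image_of_injective _ hρinj]
      simp
  rw [← himg, Finset.sum_image (fun a _ b _ h => hρinj h)]


/-- Step A: pointwise identification of the union with the low-rank condition. -/
lemma aux_pointwise {n k : ℕ} (Y H : Fin n → ℝ) (hY : Function.Injective Y)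
    (hYpos : ∀ i, 0 < Y i) (hH1 : ∀ i, H i ≤ 1) (x : Fin n) :
    (∃ ℓ : ℝ, 0 < ℓ ∧
        (Finset.univ.filter (fun z : Fin n =>
          (if Y z ≤ 1 / ℓ then H z / ℓ else Y z) <
          (if Y x ≤ 1 / ℓ then H x / ℓ else Y x))).card < k)
    ↔ (Finset.univ.filter (fun z : Fin n => Y z < Y x ∧ H z < H x)).card < k := by
  constructor
  · rintro ⟨ℓ, hℓ, hcard⟩
    refine lt_of_le_of_lt (Finset.card_le_card ?_) hcard
    intro z hz
    simp only [Finset.mem_filter, Finset.mem_univ, true_and] at hz ⊢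
    obtain ⟨hYz, hHz⟩ := hz
    by_cases hx : Y x ≤ 1 / ℓ
    · rw [if_pos hx, if_pos (le_trans hYz.le hx)]
      exact (div_lt_div_iff_of_pos_right hℓ).mpr hHz
    · rw [if_neg hx]
      by_cases hzac : Y z ≤ 1 / ℓ
      · rw [if_pos hzac]
        calc H z / ℓ ≤ 1 / ℓ := by gcongr; exact hH1 z
          _ < Y x := lt_of_not_ge hx
      · rw [if_neg hzac]; exact hYz
  · intro hcard
    have hx0 : (0:ℝ) < Y x := hYpos x
    have hℓ0 : (0:ℝ) < 1 / Y x := by positivity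
    refine ⟨1 / Y x, hℓ0, ?_⟩
    have hinv : 1 / (1 / Y x) = Y x := one_div_one_div _
    rw [hinv]
    convert hcard using 2
    apply Finset.filter_congr
    intro z _
    rw [if_pos le_rfl]
    by_cases hzac : Y z ≤ Y x
    · rw [if_pos hzac]
      rw [div_lt_div_iff_of_pos_right hℓ0]
      constructor
      · intro hH
        refine ⟨lt_of_le_of_ne hzac (fun he => ?_), hH⟩
        have : z = x := hY he
        subst this; exact lt_irrefl _ hH
      · exact And.right
    · rw [if_neg hzac]
      have h1 : H x / (1 / Y x) ≤ Y x := by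
        calc H x / (1 / Y x) ≤ 1 / (1 / Y x) := by gcongr; exact hH1 x
          _ = Y x := hinv
      constructor
      · intro hc
        exact absurd ((lt_of_lt_of_le hc h1).le) hzac
      · intro hc
        exact absurd hc.1.le hzac


lemma aux_ne_ae {Ω : Type*} [MeasurableSpace Ω] (μ : Measure Ω) [IsFiniteMeasure μ]
    {X Y : Ω → ℝ} (hX : Measurable X) (hY : Measurable Y) (hXY : IndepFun X Y μ)
    (hYc : ∀ c, μ {ω | Y ω = c} = 0) : μ {ω | X ω = Y ω} = 0 := by
  have hmap : μ.map (fun ω => (X ω, Y ω)) = (μ.map X).prod (μ.map Y) :=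
    (indepFun_iff_map_prod_eq_prod_map_map hX.aemeasurable hY.aemeasurable).mp hXY
  have hD : MeasurableSet {p : ℝ × ℝ | p.1 = p.2} := measurableSet_eq_fun measurable_fst measurable_snd
  have h1 : μ {ω | X ω = Y ω} = (μ.map (fun ω => (X ω, Y ω))) {p : ℝ × ℝ | p.1 = p.2} := by
    rw [Measure.map_apply (hX.prodMk hY) hD]
    rfl
  rw [h1, hmap, Measure.prod_apply hD]
  have : ∀ a : ℝ, (μ.map Y) (Prod.mk a ⁻¹' {p : ℝ × ℝ | p.1 = p.2}) = 0 := by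
    intro a
    have : Prod.mk a ⁻¹' {p : ℝ × ℝ | p.1 = p.2} = {a} := by
      ext b; simp [eq_comm]
    rw [this, Measure.map_apply hY (measurableSet_singleton a)]
    exact hYc a
  have this2 : ∀ a : ℝ, (μ.map Y) {a} = 0 := by
    intro a
    rw [Measure.map_apply hY (measurableSet_singleton a)]
    exact hYc a
  simp [this2]


lemma aux_map_tuple_pi {Ω : Type*} [MeasurableSpace Ω] (μ : Measure Ω) [IsProbabilityMeasure μ]
    {n : ℕ} {f : Fin n → Ω → ℝ} (hf : ∀ i, Measurable (f i))
    (hindep : iIndepFun f μ) :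
    μ.map (fun ω i => f i ω) = Measure.pi (fun i => μ.map (f i)) := by
  haveI : ∀ i, IsProbabilityMeasure (μ.map (f i)) :=
    fun i => Measure.isProbabilityMeasure_map (hf i).aemeasurable
  refine (Measure.pi_eq fun s hs => ?_).symm
  rw [Measure.map_apply (measurable_pi_lambda _ fun i => hf i) (MeasurableSet.univ_pi hs)]
  have hpre : (fun ω i => f i ω) ⁻¹' (Set.pi Set.univ s) = ⋂ i, f i ⁻¹' s i := by
    ext ω; simp [Set.mem_pi]
  rw [hpre, hindep.meas_iInter (fun i => ⟨s i, hs i, rfl⟩)]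
  exact Finset.prod_congr rfl fun i _ => (Measure.map_apply (hf i) (hs i)).symm

lemma aux_iIndep_sub {Ω ι κ : Type*} [MeasurableSpace Ω] {μ : Measure Ω}
    {f : ι → Ω → ℝ} (hindep : iIndepFun f μ)
    (e : κ ↪ ι) : iIndepFun (fun j => f (e j)) μ := by
  rw [iIndepFun_iff_measure_inter_preimage_eq_mul]
  intro S sets hsets
  classical
  have hsets' : ∀ i, i ∈ S.map e →
      MeasurableSet ((fun i => if h : ∃ j ∈ S, e j = i then sets h.choose else Set.univ) i) := by
    intro i hi
    by_cases h : ∃ j ∈ S, e j = i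
    · simp only [dif_pos h]; exact hsets _ h.choose_spec.1
    · simp only [dif_neg h]; exact MeasurableSet.univ
  have key := hindep.measure_inter_preimage_eq_mul (S.map e) hsets'
  have hval : ∀ j ∈ S, (fun i => if h : ∃ j ∈ S, e j = i then sets h.choose else Set.univ) (e j)
      = sets j := by
    intro j hj
    have h : ∃ j' ∈ S, e j' = e j := ⟨j, hj, rfl⟩
    simp only [dif_pos h]
    have := h.choose_spec.2
    have : h.choose = j := e.injective this
    rw [this]
  have h1 : (⋂ i ∈ S.map e, f i ⁻¹' (fun i => if h : ∃ j ∈ S, e j = i then sets h.choose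
      else Set.univ) i) = ⋂ j ∈ S, f (e j) ⁻¹' sets j := by
    ext ω
    simp only [Set.mem_iInter, Finset.mem_map]
    constructor
    · intro hh j hj
      have := hh (e j) ⟨j, hj, rfl⟩
      simpa only [hval j hj] using this
    · rintro hh i ⟨j, hj, rfl⟩
      simpa only [hval j hj] using hh j hj
  rw [h1] at key
  rw [key, Finset.prod_map]
  refine Finset.prod_congr rfl fun j hj => ?_
  simp only [hval j hj]



lemma aux_B_meas {n k : ℕ} (T : Finset (Fin n)) (w : Fin n) :
    MeasurableSet {v : Fin n → ℝ | ((T.erase w).filter (fun z => v z < v w)).card < k} := by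
  classical
  have hc : Measurable (fun v : Fin n → ℝ => ((T.erase w).filter (fun z => v z < v w)).card) := by
    have : (fun v : Fin n → ℝ => ((T.erase w).filter (fun z => v z < v w)).card)
        = fun v => ∑ z ∈ T.erase w, if v z < v w then 1 else 0 := by
      funext v; rw [Finset.card_filter]
    rw [this]
    apply Finset.measurable_sum
    intro z _
    exact Measurable.ite (measurableSet_lt (measurable_pi_apply z) (measurable_pi_apply w))
      measurable_const measurable_const
  exact hc (measurableSet_lt measurable_id measurable_const : MeasurableSet {m : ℕ | m < k})

lemma aux_pi_symm {n k : ℕ} (ν : Measure ℝ) [IsProbabilityMeasure ν]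
    (T : Finset (Fin n)) {x : Fin n} (hx : x ∈ T)
    (hdiag : ∀ i j : Fin n, i ≠ j → Measure.pi (fun _ : Fin n => ν) {v | v i = v j} = 0) :
    Measure.pi (fun _ : Fin n => ν)
      {v | ((T.erase x).filter (fun z => v z < v x)).card < k}
      ≤ (k : ENNReal) / T.card := by
  classical
  set m := Measure.pi (fun _ : Fin n => ν) with hm
  haveI : IsProbabilityMeasure m := by rw [hm]; infer_instance
  set B : Fin n → Set (Fin n → ℝ) :=
    fun w => {v | ((T.erase w).filter (fun z => v z < v w)).card < k} with hB
  have hBmeas : ∀ w, MeasurableSet (B w) := fun w => aux_B_meas T w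
  -- symmetry
  have hswap : ∀ w ∈ T, m (B w) = m (B x) := by
    intro w hw
    set e := Equiv.swap x w with he
    have hmp := MeasureTheory.measurePreserving_piCongrLeft (fun _ : Fin n => ν) e
    set Φ := MeasurableEquiv.piCongrLeft (fun _ : Fin n => ℝ) e with hΦdef
    have hΦ : ∀ (v : Fin n → ℝ) (j : Fin n), Φ v j = v (e.symm j) := by
      intro v j
      have h1 : Φ v (e (e.symm j)) = v (e.symm j) := by
        simp [hΦdef, MeasurableEquiv.piCongrLeft, Equiv.piCongrLeft_apply_eq_cast]
      rwa [Equiv.apply_symm_apply] at h1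
    have himg : T.image e = T := by
      apply Finset.eq_of_subset_of_card_le
      · intro a ha
        simp only [Finset.mem_image] at ha
        obtain ⟨b, hb, rfl⟩ := ha
        rcases eq_or_ne b x with rfl | h1
        · simpa [he] using hw
        · rcases eq_or_ne b w with rfl | h2
          · simpa [he] using hx
          · rwa [he, Equiv.swap_apply_of_ne_of_ne h1 h2]
      · rw [Finset.card_image_of_injective _ e.injective]
    have hpre : Φ ⁻¹' (B w) = B x := by
      ext v
      simp only [Set.mem_preimage, hB, Set.mem_setOf_eq, hΦ]
      have hsymw : e.symm w = x := by simp [he]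
      have hsym : e.symm = e := by rw [he]; exact Equiv.symm_swap x w
      rw [hsymw]
      have hcard : ((T.erase w).filter (fun z => v (e.symm z) < v x)).card
          = ((T.erase x).filter (fun z => v z < v x)).card := by
        have h1 : (((T.erase w).image e.symm).filter (fun z => v z < v x)).card
            = ((T.erase w).filter (fun z => v (e.symm z) < v x)).card := by
          rw [Finset.filter_image, Finset.card_image_of_injective _ e.symm.injective]
        rw [← h1]
        congr 2
        rw [hsym, Finset.image_erase e.injective, himg, he, Equiv.swap_apply_right]
      rw [hcard]
    calc m (B w) = m (Φ ⁻¹' (B w)) := (hmp.measure_preimage (hBmeas w).nullMeasurableSet).symm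
      _ = m (B x) := by rw [hpre]
  -- a.e. counting bound
  have hae : ∀ᵐ v ∂m, Set.InjOn v (T : Set (Fin n)) := by
    have : ∀ᵐ v ∂m, ∀ i j : Fin n, i ≠ j → v i ≠ v j := by
      rw [MeasureTheory.ae_all_iff]
      intro i
      rw [MeasureTheory.ae_all_iff]
      intro j
      rcases eq_or_ne i j with rfl | hij
      · simp
      · refine Filter.Eventually.mono ?_ (fun v hv _ => hv)
        rw [MeasureTheory.ae_iff]
        simpa using hdiag i j hij
    filter_upwards [this] with v hv
    intro a _ b _ hab
    by_contra hne
    exact hv a b hne hab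
  have hcount : ∀ᵐ v ∂m, ∑ w ∈ T, (B w).indicator (fun _ => (1 : ENNReal)) v ≤ k := by
    filter_upwards [hae] with v hv
    have : ∑ w ∈ T, (B w).indicator (fun _ => (1 : ENNReal)) v
        = ((T.filter (fun w => v ∈ B w)).card : ENNReal) := by
      rw [Finset.card_filter]
      push_cast
      refine Finset.sum_congr rfl fun w _ => ?_
      by_cases hvw : v ∈ B w <;> simp [hvw, Set.indicator]
    rw [this]
    exact_mod_cast Nat.cast_le.mpr (aux_count_low_rank hv k)
  -- combine
  have hsum : (T.card : ENNReal) * m (B x) ≤ k := by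
    have h1 : ∑ w ∈ T, m (B w) = (T.card : ENNReal) * m (B x) := by
      rw [Finset.sum_congr rfl hswap, Finset.sum_const, nsmul_eq_mul]
    have h2 : ∑ w ∈ T, m (B w) = ∫⁻ v, ∑ w ∈ T, (B w).indicator (fun _ => (1:ENNReal)) v ∂m := by
      rw [MeasureTheory.lintegral_finset_sum _
        (fun w _ => (measurable_const.indicator (hBmeas w)))]
      refine Finset.sum_congr rfl fun w _ => ?_
      rw [MeasureTheory.lintegral_indicator (hBmeas w)]
      simp
    rw [← h1, h2]
    calc ∫⁻ v, ∑ w ∈ T, (B w).indicator (fun _ => (1:ENNReal)) v ∂m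
        ≤ ∫⁻ _, (k : ENNReal) ∂m := MeasureTheory.lintegral_mono_ae hcount
      _ = k := by simp
  have hT0 : (T.card : ENNReal) ≠ 0 := by
    simp only [ne_eq, Nat.cast_eq_zero]
    exact Finset.card_ne_zero_of_mem hx
  rw [ENNReal.le_div_iff_mul_le (Or.inl hT0) (Or.inl (ENNReal.natCast_ne_top _))]
  rw [mul_comm]
  exact hsum


lemma aux_card_meas {n k : ℕ} (F : Finset (Fin n)) (w : Fin n) :
    MeasurableSet {v : Fin n → ℝ | (F.filter (fun z => v z < v w)).card < k} := by
  classical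
  have hc : Measurable (fun v : Fin n → ℝ => (F.filter (fun z => v z < v w)).card) := by
    have : (fun v : Fin n → ℝ => (F.filter (fun z => v z < v w)).card)
        = fun v => ∑ z ∈ F, if v z < v w then 1 else 0 := by
      funext v; rw [Finset.card_filter]
    rw [this]
    apply Finset.measurable_sum
    intro z _
    exact Measurable.ite (measurableSet_lt (measurable_pi_apply z) (measurable_pi_apply w))
      measurable_const measurable_const
  exact hc (measurableSet_lt measurable_id measurable_const : MeasurableSet {m : ℕ | m < k})

open MeasureTheory ProbabilityTheory Classical in
/-- Coordinated multi-objective sample size bound: `n` keys with independent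
`y x` (exponential/continuous) and `h x ~ U[0,1]`, seed
`s_ℓ(x) = h x/ℓ` if `y x ≤ 1/ℓ` else `y x`, and `S_ℓ` the set of `k` keys with smallest
seeds.  The expected number of distinct keys in `⋃_{ℓ>0} S_ℓ` is at most `k(1 + ln n)`. -/
theorem stmt_16 {Ω : Type*} [MeasurableSpace Ω] (μ : Measure Ω) [IsProbabilityMeasure μ]
    (n k : ℕ) (hn : 0 < n) (hk : 0 < k)
    (y h : Fin n → Ω → ℝ)
    (hymeas : ∀ i, Measurable (y i)) (hhmeas : ∀ i, Measurable (h i))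
    (hindep : iIndepFun (Sum.elim y h) μ)
    (hycont : ∀ i (c : ℝ), μ {ω | y i ω = c} = 0)
    (hyrange : ∀ i, ∀ᵐ ω ∂μ, 0 < y i ω)
    (hhunif : ∀ i, MeasureTheory.pdf.IsUniform (h i) (Set.Icc 0 1) μ volume) :
    ∫ ω, ((Finset.univ.filter (fun x : Fin n => ∃ ℓ : ℝ, 0 < ℓ ∧
        (Finset.univ.filter (fun z : Fin n =>
          (if y z ω ≤ 1 / ℓ then h z ω / ℓ else y z ω) <
          (if y x ω ≤ 1 / ℓ then h x ω / ℓ else y x ω))).card < k)).card : ℝ) ∂μ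
      ≤ k * (1 + Real.log n) := by
  classical
  -- notation
  set ν : Measure ℝ := volume.restrict (Set.Icc (0:ℝ) 1) with hν
  have hν1 : ν Set.univ = 1 := by
    rw [hν, Measure.restrict_apply MeasurableSet.univ, Set.univ_inter, Real.volume_Icc]
    norm_num
  haveI : IsProbabilityMeasure ν := ⟨hν1⟩
  -- marginal laws of h
  have hmap : ∀ i, μ.map (h i) = ν := by
    intro i
    have h1 : Measure.map (h i) μ = ProbabilityTheory.cond volume (Set.Icc 0 1) := hhunif i
    rw [h1]
    unfold ProbabilityTheory.cond
    rw [Real.volume_Icc]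
    norm_num
    exact hν.symm
  -- independence of the h family and the y family
  have hhind : iIndepFun h μ := by
    have := aux_iIndep_sub hindep ⟨Sum.inr, Sum.inr_injective⟩
    exact this
  -- joint law of h is the product measure
  set mpi : Measure (Fin n → ℝ) := Measure.pi (fun _ : Fin n => ν) with hmpi
  have hlaw : μ.map (fun ω i => h i ω) = mpi := by
    rw [aux_map_tuple_pi μ hhmeas hhind, hmpi]
    congr 1
    funext i
    exact hmap i
  have hHmeas : Measurable (fun ω (i : Fin n) => h i ω) :=
    measurable_pi_lambda _ fun i => hhmeas i
  -- pairwise independence facts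
  have hpairind : ∀ (i j : Fin n), i ≠ j → IndepFun (h i) (h j) μ := by
    intro i j hij
    exact hindep.indepFun (i := Sum.inr i) (j := Sum.inr j) (by simp [hij])
  have hypairind : ∀ (i j : Fin n), i ≠ j → IndepFun (y i) (y j) μ := by
    intro i j hij
    exact hindep.indepFun (i := Sum.inl i) (j := Sum.inl j) (by simp [hij])
  have hhcont : ∀ i (c : ℝ), μ {ω | h i ω = c} = 0 := by
    intro i c
    have : μ {ω | h i ω = c} = (μ.map (h i)) {c} := by
      rw [Measure.map_apply (hhmeas i) (measurableSet_singleton c)]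
      rfl
    rw [this, hmap i, hν, Measure.restrict_apply (measurableSet_singleton c)]
    exact measure_mono_null Set.inter_subset_left (Real.volume_singleton)
  -- diagonal null under mpi
  have hdiag : ∀ i j : Fin n, i ≠ j → mpi {v | v i = v j} = 0 := by
    intro i j hij
    have hD : MeasurableSet {v : Fin n → ℝ | v i = v j} :=
      measurableSet_eq_fun (measurable_pi_apply i) (measurable_pi_apply j)
    rw [← hlaw, Measure.map_apply hHmeas hD]
    have : (fun ω (i : Fin n) => h i ω) ⁻¹' {v | v i = v j} = {ω | h i ω = h j ω} := rfl
    rw [this]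
    exact aux_ne_ae μ (hhmeas i) (hhmeas j) (hpairind i j hij) (hhcont j)
  -- a.e. good event
  have hydist : ∀ᵐ ω ∂μ, ∀ i j : Fin n, i ≠ j → y i ω ≠ y j ω := by
    rw [MeasureTheory.ae_all_iff]; intro i
    rw [MeasureTheory.ae_all_iff]; intro j
    rcases eq_or_ne i j with rfl | hij
    · simp
    · refine Filter.Eventually.mono ?_ (fun ω hv _ => hv)
      rw [MeasureTheory.ae_iff]
      simpa using aux_ne_ae μ (hymeas i) (hymeas j) (hypairind i j hij) (hycont j)
  have hypos : ∀ᵐ ω ∂μ, ∀ i, 0 < y i ω := by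
    rw [MeasureTheory.ae_all_iff]; exact hyrange
  have hh1 : ∀ᵐ ω ∂μ, ∀ i, h i ω ≤ 1 := by
    rw [MeasureTheory.ae_all_iff]
    intro i
    rw [MeasureTheory.ae_iff]
    have : {ω | ¬ h i ω ≤ 1} = h i ⁻¹' (Set.Ioi 1) := by
      ext ω; simp [Set.mem_Ioi, not_le]
    rw [this, ← Measure.map_apply (hhmeas i) measurableSet_Ioi, hmap i, hν,
      Measure.restrict_apply measurableSet_Ioi]
    have : Set.Ioi (1:ℝ) ∩ Set.Icc 0 1 = ∅ := by
      ext t; simp only [Set.mem_inter_iff, Set.mem_Ioi, Set.mem_Icc, Set.mem_empty_iff_false,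
        iff_false, not_and]
      intro ht h2 h3
      linarith
    rw [this]
    simp
  -- the low-rank events
  set A : Fin n → Set Ω := fun x =>
    {ω | (Finset.univ.filter (fun z : Fin n => y z ω < y x ω ∧ h z ω < h x ω)).card < k}
    with hA
  have hNmeas : ∀ x, Measurable (fun ω =>
      (Finset.univ.filter (fun z : Fin n => y z ω < y x ω ∧ h z ω < h x ω)).card) := by
    intro x
    have : (fun ω => (Finset.univ.filter
        (fun z : Fin n => y z ω < y x ω ∧ h z ω < h x ω)).card)
        = fun ω => ∑ z : Fin n, if y z ω < y x ω ∧ h z ω < h x ω then 1 else 0 := by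
      funext ω; rw [Finset.card_filter]
    rw [this]
    apply Finset.measurable_sum
    intro z _
    refine Measurable.ite ?_ measurable_const measurable_const
    exact MeasurableSet.inter (measurableSet_lt (hymeas z) (hymeas x))
      (measurableSet_lt (hhmeas z) (hhmeas x))
  have hAmeas : ∀ x, MeasurableSet (A x) := by
    intro x
    exact (hNmeas x) (measurableSet_lt measurable_id measurable_const : MeasurableSet {m : ℕ | m < k})
  -- Step A : rewrite the integrand
  have hstepA : ∫ ω, ((Finset.univ.filter (fun x : Fin n => ∃ ℓ : ℝ, 0 < ℓ ∧
        (Finset.univ.filter (fun z : Fin n =>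
          (if y z ω ≤ 1 / ℓ then h z ω / ℓ else y z ω) <
          (if y x ω ≤ 1 / ℓ then h x ω / ℓ else y x ω))).card < k)).card : ℝ) ∂μ
      = ∫ ω, (∑ x : Fin n, (A x).indicator (fun _ => (1:ℝ)) ω) ∂μ := by
    apply integral_congr_ae
    filter_upwards [hydist, hypos, hh1] with ω hyd hyp hh1'
    have hYinj : Function.Injective (fun z => y z ω) := by
      intro a b hab
      by_contra hne
      exact hyd a b hne hab
    have h1 : ∀ x : Fin n, (∃ ℓ : ℝ, 0 < ℓ ∧
        (Finset.univ.filter (fun z : Fin n =>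
          (if y z ω ≤ 1 / ℓ then h z ω / ℓ else y z ω) <
          (if y x ω ≤ 1 / ℓ then h x ω / ℓ else y x ω))).card < k)
        ↔ ω ∈ A x := by
      intro x
      exact aux_pointwise (fun z => y z ω) (fun z => h z ω) hYinj (fun i => hyp i)
        (fun i => hh1' i) x
    rw [Finset.filter_congr (fun x _ => h1 x)]
    rw [Finset.card_filter]
    push_cast
    refine Finset.sum_congr rfl fun x _ => ?_
    by_cases hx : ω ∈ A x <;> simp [hx, Set.indicator]
  rw [hstepA]
  -- Step B : integral = sum of probabilities
  have hintA : ∀ x, Integrable ((A x).indicator (fun _ => (1:ℝ))) μ :=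
    fun x => (integrable_const (1:ℝ)).indicator (hAmeas x)
  rw [integral_finset_sum _ (fun x _ => hintA x)]
  have hindic : ∀ x : Fin n, ∫ ω, (A x).indicator (fun _ => (1:ℝ)) ω ∂μ = (μ (A x)).toReal := by
    intro x
    rw [integral_indicator_const (1:ℝ) (hAmeas x)]
    simp
    rfl
  rw [Finset.sum_congr rfl fun x _ => hindic x]
  -- events for decomposition
  set Ytup : Ω → (Fin n → ℝ) := fun ω i => y i ω with hYtup
  set Htup : Ω → (Fin n → ℝ) := fun ω i => h i ω with hHtup
  have hYtupmeas : Measurable Ytup := measurable_pi_lambda _ fun i => hymeas i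
  set CE : Fin n → Finset (Fin n) → Set (Fin n → ℝ) := fun x S =>
    {v | Finset.univ.filter (fun z => v z < v x) = S} with hCE
  set CF : Fin n → Finset (Fin n) → Set (Fin n → ℝ) := fun x S =>
    {v | (S.filter (fun z => v z < v x)).card < k} with hCF
  have hCEmeas : ∀ x S, MeasurableSet (CE x S) := by
    intro x S
    have hrw : CE x S = ⋂ z : Fin n,
        (if z ∈ S then {v : Fin n → ℝ | v z < v x} else {v : Fin n → ℝ | v z < v x}ᶜ) := by
      ext v
      simp only [hCE, Set.mem_iInter, Set.mem_setOf_eq, Finset.ext_iff, Finset.mem_filter,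
        Finset.mem_univ, true_and]
      constructor
      · intro hh z
        by_cases hz : z ∈ S
        · simp only [if_pos hz]
          exact (hh z).mpr hz
        · simp only [if_neg hz, Set.mem_compl_iff, Set.mem_setOf_eq]
          exact fun hc => hz ((hh z).mp hc)
      · intro hh z
        by_cases hz : z ∈ S
        · have := hh z
          simp only [if_pos hz] at this
          exact ⟨fun _ => hz, fun _ => this⟩
        · have := hh z
          simp only [if_neg hz, Set.mem_compl_iff, Set.mem_setOf_eq] at this
          exact ⟨fun hc => absurd hc this, fun hc => absurd hc hz⟩
    rw [hrw]
    refine MeasurableSet.iInter fun z => ?_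
    by_cases hz : z ∈ S
    · simp only [if_pos hz]
      exact measurableSet_lt (measurable_pi_apply z) (measurable_pi_apply x)
    · simp only [if_neg hz]
      exact (measurableSet_lt (measurable_pi_apply z) (measurable_pi_apply x)).compl
  have hCFmeas : ∀ x S, MeasurableSet (CF x S) := fun x S => aux_card_meas S x
  set E : Fin n → Finset (Fin n) → Set Ω := fun x S => Ytup ⁻¹' (CE x S) with hE
  set F : Fin n → Finset (Fin n) → Set Ω := fun x S => Htup ⁻¹' (CF x S) with hF
  have hEmeas : ∀ x S, MeasurableSet (E x S) := fun x S => hYtupmeas (hCEmeas x S)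
  have hFmeas : ∀ x S, MeasurableSet (F x S) := fun x S => hHmeas (hCFmeas x S)
  -- independence of the two tuples
  have hYH : IndepFun Ytup Htup μ := by
    have hmeas_all : ∀ i : Fin n ⊕ Fin n, Measurable (Sum.elim y h i) := by
      rintro (i | i)
      · exact hymeas i
      · exact hhmeas i
    have hdisj : Disjoint ((Finset.univ : Finset (Fin n)).image Sum.inl)
        ((Finset.univ : Finset (Fin n)).image (Sum.inr : Fin n → Fin n ⊕ Fin n)) := by
      simp only [Finset.disjoint_left, Finset.mem_image]
      rintro a ⟨i, _, rfl⟩ ⟨j, _, hj⟩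
      exact Sum.inl_ne_inr hj.symm
    have base := hindep.indepFun_finset _ _ hdisj hmeas_all
    have hg1 : Measurable (fun (v : ((Finset.univ : Finset (Fin n)).image Sum.inl : Finset (Fin n ⊕ Fin n)) → ℝ)
        (i : Fin n) => v ⟨Sum.inl i, by simp⟩) :=
      measurable_pi_lambda _ fun i => measurable_pi_apply _
    have hg2 : Measurable (fun (v : ((Finset.univ : Finset (Fin n)).image (Sum.inr : Fin n → Fin n ⊕ Fin n) : Finset (Fin n ⊕ Fin n)) → ℝ)
        (i : Fin n) => v ⟨Sum.inr i, by simp⟩) :=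
      measurable_pi_lambda _ fun i => measurable_pi_apply _
    exact base.comp hg1 hg2
  have hEF : ∀ x S, μ (E x S ∩ F x S) = μ (E x S) * μ (F x S) := by
    intro x S
    exact hYH.measure_inter_preimage_eq_mul _ _ (hCEmeas x S) (hCFmeas x S)
  -- bound on μ (F x S) when x ∉ S
  have hFbound : ∀ (x : Fin n) (S : Finset (Fin n)), x ∉ S →
      μ (F x S) ≤ (k : ENNReal) / ((S.card + 1 : ℕ) : ENNReal) := by
    intro x S hxS
    have h1 : μ (F x S) = mpi (CF x S) := by
      rw [hF, ← hlaw, Measure.map_apply hHmeas (hCFmeas x S)]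
    have h2 := aux_pi_symm (k := k) ν (insert x S) (Finset.mem_insert_self x S) hdiag
    rw [Finset.erase_insert hxS] at h2
    rw [Finset.card_insert_of_notMem hxS] at h2
    rw [h1]
    exact h2
  -- decomposition of A x
  have hcover : ∀ x, A x = ⋃ S ∈ (Finset.univ : Finset (Fin n)).powerset,
      (E x S ∩ F x S) := by
    intro x
    ext ω
    simp only [Set.mem_iUnion, Set.mem_inter_iff, hA, hE, hF, hCE, hCF, Set.mem_setOf_eq,
      Set.mem_preimage, exists_prop]
    constructor
    · intro hω
      refine ⟨Finset.univ.filter (fun z => y z ω < y x ω), Finset.mem_powerset.mpr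
        (Finset.subset_univ _), rfl, ?_⟩
      rw [Finset.filter_filter]
      refine lt_of_le_of_lt (le_of_eq ?_) hω
      congr 1
    · rintro ⟨S, _, hES, hFS⟩
      rw [← hES] at hFS
      rw [Finset.filter_filter] at hFS
      refine lt_of_le_of_lt (le_of_eq ?_) hFS
      congr 1
  have hdisjE : ∀ x, Set.PairwiseDisjoint
      ((Finset.univ : Finset (Fin n)).powerset : Set (Finset (Fin n)))
      (fun S => E x S ∩ F x S) := by
    intro x S _ S' _ hSS'
    refine Set.disjoint_left.mpr fun ω hω hω' => ?_
    exact hSS' (hω.1.symm.trans hω'.1)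
  have hsplit : ∀ x, μ (A x) = ∑ S ∈ (Finset.univ : Finset (Fin n)).powerset,
      μ (E x S ∩ F x S) := by
    intro x
    rw [hcover x]
    exact measure_biUnion_finset (hdisjE x)
      (fun S _ => (hEmeas x S).inter (hFmeas x S))
  -- per-term real bound
  have hterm : ∀ (x : Fin n) (S : Finset (Fin n)),
      (μ (E x S ∩ F x S)).toReal ≤ (μ (E x S)).toReal * ((k:ℝ) / (S.card + 1)) := by
    intro x S
    by_cases hxS : x ∈ S
    · have hempty : E x S = ∅ := by
        ext ω
        simp only [hE, hCE, Set.mem_preimage, Set.mem_setOf_eq, Set.mem_empty_iff_false,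
          iff_false]
        intro hc
        have : x ∈ Finset.univ.filter (fun z => Ytup ω z < Ytup ω x) := hc ▸ hxS
        simp at this
      rw [hempty]
      simp only [Set.empty_inter, measure_empty, ENNReal.toReal_zero, measure_empty]
      positivity
    · rw [hEF x S]
      rw [ENNReal.toReal_mul]
      refine mul_le_mul_of_nonneg_left ?_ ENNReal.toReal_nonneg
      have hb := hFbound x S hxS
      have hne : (k : ENNReal) / ((S.card + 1 : ℕ) : ENNReal) ≠ ⊤ :=
        (ENNReal.div_lt_top (ENNReal.natCast_ne_top k)
          (Nat.cast_ne_zero.mpr (Nat.succ_ne_zero S.card))).ne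
      refine le_trans (ENNReal.toReal_mono hne hb) (le_of_eq ?_)
      rw [ENNReal.toReal_div, ENNReal.toReal_natCast, ENNReal.toReal_natCast]
      push_cast
      ring
  -- the rank integrand
  set q : ℕ → ℝ := fun m => (k:ℝ)/m with hq
  set G : Fin n → Ω → ℝ := fun x ω =>
    q ((Finset.univ.filter (fun z => y z ω < y x ω)).card + 1) with hG
  have hGsum : ∀ x, G x = fun ω => ∑ S ∈ (Finset.univ : Finset (Fin n)).powerset,
      (E x S).indicator (fun _ => q (S.card + 1)) ω := by
    intro x
    funext ω
    have hS0 : Finset.univ.filter (fun z => y z ω < y x ω) ∈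
        (Finset.univ : Finset (Fin n)).powerset :=
      Finset.mem_powerset.mpr (Finset.subset_univ _)
    rw [Finset.sum_eq_single (Finset.univ.filter (fun z => y z ω < y x ω))]
    · have hmem : ω ∈ E x (Finset.univ.filter (fun z => y z ω < y x ω)) := by
        simp only [hE, hCE, Set.mem_preimage, Set.mem_setOf_eq, hYtup]
      rw [Set.indicator_of_mem hmem]
    · intro S _ hSne
      refine Set.indicator_of_notMem ?_ _
      simp only [hE, hCE, Set.mem_preimage, Set.mem_setOf_eq]
      intro hc
      exact hSne hc.symm
    · intro hc
      exact absurd hS0 hc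
  have hGint : ∀ x, Integrable (G x) μ := by
    intro x
    rw [hGsum x]
    exact integrable_finset_sum _ (fun S _ =>
      (integrable_const _).indicator (hEmeas x S))
  have hGval : ∀ x, ∫ ω, G x ω ∂μ = ∑ S ∈ (Finset.univ : Finset (Fin n)).powerset,
      (μ (E x S)).toReal * q (S.card + 1) := by
    intro x
    rw [hGsum x]
    rw [integral_finset_sum _ (fun S _ => (integrable_const _).indicator (hEmeas x S))]
    refine Finset.sum_congr rfl fun S _ => ?_
    rw [integral_indicator_const _ (hEmeas x S)]
    simp [mul_comm, Measure.real]
  -- chain of bounds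
  have hxbound : ∀ x, (μ (A x)).toReal ≤ ∫ ω, G x ω ∂μ := by
    intro x
    rw [hsplit x, hGval x]
    rw [ENNReal.toReal_sum (fun S _ => measure_ne_top μ _)]
    refine Finset.sum_le_sum fun S _ => ?_
    have hqeq : q (S.card + 1) = (k:ℝ) / ((S.card : ℝ) + 1) := by
      rw [hq]; push_cast; ring
    rw [hqeq]
    exact hterm x S
  refine le_trans (Finset.sum_le_sum fun x _ => hxbound x) ?_
  rw [← integral_finset_sum _ (fun x _ => hGint x)]
  have hconst : ∀ᵐ ω ∂μ, ∑ x : Fin n, G x ω = ∑ i ∈ Finset.Icc 1 n, q i := by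
    filter_upwards [hydist] with ω hyd
    have hYinj : Function.Injective (fun z => y z ω) := by
      intro a b hab
      by_contra hne
      exact hyd a b hne hab
    exact aux_sum_rank hYinj q
  rw [integral_congr_ae hconst]
  rw [integral_const]
  simp only [measure_univ, probReal_univ, ENNReal.toReal_one, smul_eq_mul, one_mul]
  have : ∑ i ∈ Finset.Icc 1 n, q i = (k:ℝ) * ∑ i ∈ Finset.Icc 1 n, (1:ℝ)/i := by
    rw [Finset.mul_sum]
    refine Finset.sum_congr rfl fun i _ => ?_
    rw [hq]
    field_simp
  rw [this]
  have hk0 : (0:ℝ) ≤ k := Nat.cast_nonneg k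
  exact mul_le_mul_of_nonneg_left (aux_harmonic_le n) hk0
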